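/- arXiv:math-ph/0406026 — 3 statements merged into one kernel-verified Lean document; each statement's English description precedes it below -/
import Mathlib

section
/- Let ω ∈ ℝ^l satisfy the diophantine condition |⟨ω,k⟩| ≥ γ|k|^{-τ} for all nonzero k ∈ ℤ^l, with γ > 0 and τ > 0. If (g_k)_{k∈ℤ^l} are complex numbers with Σ_k e^{ρ|k|}|g_k| < ∞ and g_0 = 0, then the series w := Σ_{k≠0} g_k/(i⟨ω,k⟩) satisfies Σ_k e^{(ρ-d)|k|}|w_k| ≤ (τ/e)^τ γ^{-1} d^{-τ} Σ_k e^{ρ|k|}|g_k| for any 0 < d < ρ, where w_k = g_k/(i⟨ω,k⟩). -/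
open Real Finset Complex

lemma key_ineq {τ : ℝ} (hτ : 0 < τ) {y : ℝ} (hy : 0 < y) :
    y ^ τ * Real.exp (-y) ≤ (τ / Real.exp 1) ^ τ := by
  have h1 : Real.log (y / τ) ≤ y / τ - 1 := Real.log_le_sub_one_of_pos (by positivity)
  have hld : Real.log (y / τ) = Real.log y - Real.log τ :=
    Real.log_div (ne_of_gt hy) (ne_of_gt hτ)
  have hτe : (τ / Real.exp 1) ^ τ = Real.exp ((Real.log τ - 1) * τ) := by
    rw [Real.rpow_def_of_pos (by positivity),
      Real.log_div (ne_of_gt hτ) (Real.exp_ne_zero 1), Real.log_exp]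
  rw [Real.rpow_def_of_pos hy, ← Real.exp_add, hτe, Real.exp_le_exp]
  have h2 : τ * Real.log (y / τ) ≤ τ * (y / τ - 1) :=
    mul_le_mul_of_nonneg_left h1 hτ.le
  rw [hld] at h2
  have : τ * (y / τ - 1) = y - τ := by field_simp
  nlinarith

/-- solution of the homological equation on the Fourier side.
If ω is (γ,τ)-diophantine, Σ e^{ρ|k|}|g_k| < ∞ and g₀ = 0, then the coefficients
w_k = g_k/(i⟨ω,k⟩) (k ≠ 0) satisfy
Σ e^{(ρ-d)|k|}|w_k| ≤ (τ/e)^τ γ⁻¹ d^{-τ} Σ e^{ρ|k|}|g_k| for 0 < d < ρ. -/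
theorem stmt_2 (l : ℕ) (ω : Fin l → ℝ) (γ τ : ℝ) (hγ : 0 < γ) (hτ : 0 < τ)
    (hdio : ∀ k : Fin l → ℤ, k ≠ 0 →
      γ * (∑ i, (|k i| : ℝ)) ^ (-τ) ≤ |∑ i, ω i * (k i : ℝ)|)
    (g : (Fin l → ℤ) → ℂ) (ρ d : ℝ) (hd : 0 < d) (hdρ : d < ρ)
    (hg : Summable fun k : Fin l → ℤ =>
      Real.exp (ρ * ∑ i, (|k i| : ℝ)) * ‖g k‖)
    (hg0 : g 0 = 0)
    (w : (Fin l → ℤ) → ℂ)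
    (hw : ∀ k : Fin l → ℤ, k ≠ 0 →
      w k = g k / (Complex.I * (∑ i, ω i * (k i : ℝ) : ℝ)))
    (hw0 : w 0 = 0) :
    Summable (fun k : Fin l → ℤ =>
      Real.exp ((ρ - d) * ∑ i, (|k i| : ℝ)) * ‖w k‖) ∧
    (∑' k : Fin l → ℤ, Real.exp ((ρ - d) * ∑ i, (|k i| : ℝ)) * ‖w k‖) ≤
      (τ / Real.exp 1) ^ τ * γ⁻¹ * d ^ (-τ) *
        ∑' k : Fin l → ℤ, Real.exp (ρ * ∑ i, (|k i| : ℝ)) * ‖g k‖ := by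
  set C : ℝ := (τ / Real.exp 1) ^ τ * γ⁻¹ * d ^ (-τ) with hC
  have hCnn : 0 ≤ C := by positivity
  have hpt : ∀ k : Fin l → ℤ,
      Real.exp ((ρ - d) * ∑ i, (|k i| : ℝ)) * ‖w k‖ ≤
      C * (Real.exp (ρ * ∑ i, (|k i| : ℝ)) * ‖g k‖) := by
    intro k
    by_cases hk : k = 0
    · subst hk
      rw [hw0]
      simp
      positivity
    · set S : ℝ := ∑ i, (|k i| : ℝ) with hS
      have hSpos : 0 < S := by
        obtain ⟨i, hi⟩ := Function.ne_iff.mp hk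
        refine Finset.sum_pos' (fun j _ => by positivity) ⟨i, Finset.mem_univ i, ?_⟩
        have h1 : (1 : ℤ) ≤ |k i| := Int.one_le_abs (by simpa using hi)
        have : (1 : ℝ) ≤ |(k i : ℝ)| := by push_cast; exact_mod_cast h1
        linarith
      set a : ℝ := ∑ i, ω i * (k i : ℝ) with ha
      have hdio' : γ * S ^ (-τ) ≤ |a| := hdio k hk
      have hapos : 0 < |a| := lt_of_lt_of_le (by positivity) hdio'
      have hnw : ‖w k‖ = ‖g k‖ / |a| := by
        rw [hw k hk]
        rw [norm_div, norm_mul, Complex.norm_I, one_mul, Complex.norm_real,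
          Real.norm_eq_abs]
      have h1 : ‖w k‖ ≤ ‖g k‖ * (γ⁻¹ * S ^ τ) := by
        rw [hnw, div_le_iff₀ hapos]
        calc ‖g k‖ = ‖g k‖ * (γ⁻¹ * S ^ τ) * (γ * S ^ (-τ)) := by
              rw [Real.rpow_neg hSpos.le]
              field_simp
          _ ≤ ‖g k‖ * (γ⁻¹ * S ^ τ) * |a| := by
              apply mul_le_mul_of_nonneg_left hdio' (by positivity)
      have h2 : S ^ τ * Real.exp (-(d * S)) ≤ (τ / Real.exp 1) ^ τ * d ^ (-τ) := by
        have := key_ineq hτ (y := d * S) (by positivity)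
        have hds : (d * S) ^ τ = d ^ τ * S ^ τ := Real.mul_rpow hd.le hSpos.le
        rw [hds] at this
        rw [Real.rpow_neg hd.le]
        have hdτ : 0 < d ^ τ := Real.rpow_pos_of_pos hd τ
        calc S ^ τ * Real.exp (-(d * S))
            = d ^ τ * S ^ τ * Real.exp (-(d * S)) / d ^ τ := by field_simp
          _ ≤ (τ / Real.exp 1) ^ τ / d ^ τ := (div_le_div_iff_of_pos_right hdτ).mpr this
          _ = (τ / Real.exp 1) ^ τ * (d ^ τ)⁻¹ := div_eq_mul_inv _ _
      calc Real.exp ((ρ - d) * S) * ‖w k‖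
          ≤ Real.exp ((ρ - d) * S) * (‖g k‖ * (γ⁻¹ * S ^ τ)) :=
            mul_le_mul_of_nonneg_left h1 (Real.exp_pos _).le
        _ = Real.exp (ρ * S) * ‖g k‖ * γ⁻¹ * (S ^ τ * Real.exp (-(d * S))) := by
            rw [show (ρ - d) * S = ρ * S + -(d * S) by ring, Real.exp_add]; ring
        _ ≤ Real.exp (ρ * S) * ‖g k‖ * γ⁻¹ * ((τ / Real.exp 1) ^ τ * d ^ (-τ)) := by
            apply mul_le_mul_of_nonneg_left h2 (by positivity)
        _ = C * (Real.exp (ρ * S) * ‖g k‖) := by rw [hC]; ring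
  have hCsum : Summable (fun k : Fin l → ℤ =>
      C * (Real.exp (ρ * ∑ i, (|k i| : ℝ)) * ‖g k‖)) := hg.mul_left C
  have hsum : Summable (fun k : Fin l → ℤ =>
      Real.exp ((ρ - d) * ∑ i, (|k i| : ℝ)) * ‖w k‖) :=
    Summable.of_nonneg_of_le (fun k => by positivity) hpt hCsum
  refine ⟨hsum, ?_⟩
  calc (∑' k : Fin l → ℤ, Real.exp ((ρ - d) * ∑ i, (|k i| : ℝ)) * ‖w k‖)
      ≤ ∑' k : Fin l → ℤ, C * (Real.exp (ρ * ∑ i, (|k i| : ℝ)) * ‖g k‖) :=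
        Summable.tsum_le_tsum hpt hsum hCsum
    _ = C * ∑' k : Fin l → ℤ, Real.exp (ρ * ∑ i, (|k i| : ℝ)) * ‖g k‖ :=
        tsum_mul_left
end

section
/- Let γ₀ = γ > 0 and define γ_p = γ_{p-1} - ε_p (1 + K_{p-1}^τ) where ε_p = ε^{2^{p-1}} M_p, K_p = pK, and M_p ≤ (4p²/ρ)^{2τp}(4p²/σ)^{2p} M^{2^p}. Then for ε > 0 small enough (depending on γ, K, τ, ρ, σ, M), the sequence γ_p is decreasing, remains bounded below by γ/2, and converges to a positive limit γ_∞. -/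
open Real Filter

lemma nat_sq_le (p : ℕ) : p ^ 2 ≤ 2 ^ (p + 1) := by
  induction p with
  | zero => simp
  | succ n ih =>
    have h1 : n < 2 ^ n := Nat.lt_two_pow_self (n := n)
    have h2 : 2 ^ (n + 2) = 2 * 2 ^ (n + 1) := by ring
    have h3 : 2 ^ (n + 1) = 2 * 2 ^ n := by ring
    nlinarith

lemma nat_sq_le' (p : ℕ) (hp : 1 ≤ p) : p ^ 2 ≤ 4 * 2 ^ (p - 1) := by
  have h : 4 * 2 ^ (p - 1) = 2 ^ (p + 1) := by
    have h2 : p - 1 + 2 = p + 1 := by omega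
    rw [← h2]; ring
  rw [h]; exact nat_sq_le p

lemma nat_4sq_le (p : ℕ) (hp : 1 ≤ p) : 4 * p ^ 2 ≤ 16 ^ p := by
  have h1 : 4 * p ^ 2 ≤ 2 ^ (p + 3) := by
    have h := nat_sq_le p
    have h2 : 2 ^ (p + 3) = 4 * 2 ^ (p + 1) := by ring
    omega
  have h2 : (2:ℕ) ^ (p + 3) ≤ 2 ^ (4 * p) := Nat.pow_le_pow_right (by norm_num) (by omega)
  have h3 : (16:ℕ) ^ p = 2 ^ (4 * p) := by
    rw [show (16:ℕ) = 2 ^ 4 by norm_num, ← pow_mul]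
  omega

set_option maxHeartbeats 1600000 in
lemma key (K τ ρ σ M : ℝ) (hK : 0 < K) (hτ : 0 < τ)
    (hρ : 0 < ρ) (hσ : 0 < σ) (hM : 0 < M)
    (Mp : ℕ → ℝ) (hMp0 : ∀ p, 0 ≤ Mp p)
    (hMp : ∀ p : ℕ, 1 ≤ p →
      Mp p ≤ (4 * (p : ℝ) ^ 2 / ρ) ^ (2 * τ * p) * (4 * (p : ℝ) ^ 2 / σ) ^ (2 * p) *
        M ^ (2 ^ p)) :
    ∃ B : ℝ, 1 ≤ B ∧ ∀ p : ℕ, 1 ≤ p →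
      Mp p * (1 + (((p : ℝ) - 1) * K) ^ τ) ≤ B ^ (2 ^ (p - 1)) := by
  have hminρ : 0 < min ρ 1 := by positivity
  have hminσ : 0 < min σ 1 := by positivity
  set a : ℝ := 16 / min ρ 1 with ha_def
  set b : ℝ := 16 / min σ 1 with hb_def
  set m : ℝ := max M 1 with hm_def
  set c : ℝ := (max K 1) ^ τ * (2:ℝ) ^ τ with hc_def
  have ha0 : 0 < a := by positivity
  have hb0 : 0 < b := by positivity
  have ha1 : 1 ≤ a := by
    rw [ha_def, le_div_iff₀ hminρ]
    have := min_le_right ρ 1; linarith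
  have hb1 : 1 ≤ b := by
    rw [hb_def, le_div_iff₀ hminσ]
    have := min_le_right σ 1; linarith
  have hm1 : 1 ≤ m := le_max_right M 1
  have hc1 : 1 ≤ c := by
    have h1 : (1:ℝ) ≤ (max K 1) ^ τ := Real.one_le_rpow (le_max_right K 1) hτ.le
    have h2 : (1:ℝ) ≤ (2:ℝ) ^ τ := Real.one_le_rpow (by norm_num) hτ.le
    nlinarith
  refine ⟨a ^ (8 * τ) * b ^ 8 * m ^ 2 * (2 * c), ?_, ?_⟩
  · have h1 : (1:ℝ) ≤ a ^ (8 * τ) := Real.one_le_rpow ha1 (by positivity)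
    have h2 : (1:ℝ) ≤ b ^ 8 := one_le_pow₀ hb1
    have h3 : (1:ℝ) ≤ m ^ 2 := one_le_pow₀ hm1
    have hA : (1:ℝ) ≤ a ^ (8 * τ) * b ^ 8 := by nlinarith
    have hB : (1:ℝ) ≤ a ^ (8 * τ) * b ^ 8 * m ^ 2 := by nlinarith
    nlinarith
  intro p hp
  set n : ℕ := 2 ^ (p - 1) with hn_def
  have hn1 : 1 ≤ n := Nat.one_le_two_pow
  have hpn : (p : ℝ) - 1 ≤ (n : ℝ) := by
    have h := (Nat.lt_two_pow_self (n := p - 1)).le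
    have : ((p - 1 : ℕ) : ℝ) ≤ (n : ℝ) := by exact_mod_cast h
    rw [Nat.cast_sub hp] at this; push_cast at this ⊢; linarith
  have hsqn : (p : ℝ) ^ 2 ≤ 4 * (n : ℝ) := by
    have h := nat_sq_le' p hp
    exact_mod_cast h
  -- Factor 1 : rpow factor
  have hF1 : (4 * (p : ℝ) ^ 2 / ρ) ^ (2 * τ * p) ≤ (a ^ (8 * τ)) ^ n := by
    have hbase0 : (0:ℝ) ≤ 4 * (p : ℝ) ^ 2 / ρ := by positivity
    have hbase : 4 * (p : ℝ) ^ 2 / ρ ≤ a ^ p := by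
      rw [ha_def, div_pow]
      refine div_le_div₀ (by positivity) ?_ (by positivity) ?_
      · exact_mod_cast nat_4sq_le p hp
      · calc (min ρ 1) ^ p ≤ min ρ 1 := pow_le_of_le_one hminρ.le (min_le_right ρ 1) (by omega)
          _ ≤ ρ := min_le_left ρ 1
    calc (4 * (p : ℝ) ^ 2 / ρ) ^ (2 * τ * p)
        ≤ (a ^ p) ^ (2 * τ * p) := Real.rpow_le_rpow hbase0 hbase (by positivity)
      _ = a ^ ((p : ℝ) * (2 * τ * p)) := by
          rw [← Real.rpow_natCast a p, ← Real.rpow_mul ha0.le]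
      _ ≤ a ^ (8 * τ * (n : ℝ)) := by
          apply Real.rpow_le_rpow_of_exponent_le ha1
          nlinarith [hτ.le, sq_nonneg ((p:ℝ))]
      _ = (a ^ (8 * τ)) ^ n := by
          rw [Real.rpow_mul ha0.le, Real.rpow_natCast]
  -- Factor 2 : nat pow factor
  have hF2 : (4 * (p : ℝ) ^ 2 / σ) ^ (2 * p) ≤ (b ^ 8) ^ n := by
    have hbase0 : (0:ℝ) ≤ 4 * (p : ℝ) ^ 2 / σ := by positivity
    have hbase : 4 * (p : ℝ) ^ 2 / σ ≤ b ^ p := by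
      rw [hb_def, div_pow]
      refine div_le_div₀ (by positivity) ?_ (by positivity) ?_
      · exact_mod_cast nat_4sq_le p hp
      · calc (min σ 1) ^ p ≤ min σ 1 := pow_le_of_le_one hminσ.le (min_le_right σ 1) (by omega)
          _ ≤ σ := min_le_left σ 1
    calc (4 * (p : ℝ) ^ 2 / σ) ^ (2 * p)
        ≤ (b ^ p) ^ (2 * p) := pow_le_pow_left₀ hbase0 hbase _
      _ = b ^ (p * (2 * p)) := by rw [← pow_mul]
      _ ≤ b ^ (8 * n) := by
          apply pow_le_pow_right₀ hb1
          have h := nat_sq_le' p hp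
          calc p * (2 * p) = 2 * p ^ 2 := by ring
            _ ≤ 2 * (4 * 2 ^ (p - 1)) := by omega
            _ = 8 * n := by rw [hn_def]; ring
      _ = (b ^ 8) ^ n := by rw [pow_mul]
  -- Factor 3
  have hF3 : M ^ (2 ^ p) ≤ (m ^ 2) ^ n := by
    have h1 : M ^ (2 ^ p) ≤ m ^ (2 ^ p) := pow_le_pow_left₀ hM.le (le_max_left M 1) _
    have h2 : (2:ℕ) ^ p = 2 * n := by
      rw [hn_def, ← pow_succ']
      congr 1; omega
    calc M ^ (2 ^ p) ≤ m ^ (2 ^ p) := h1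
      _ = (m ^ 2) ^ n := by rw [h2, pow_mul]
  -- Factor 4
  have hF4 : 1 + (((p : ℝ) - 1) * K) ^ τ ≤ (2 * c) ^ n := by
    have hx0 : (0:ℝ) ≤ ((p : ℝ) - 1) * K := by
      have : (1:ℝ) ≤ (p : ℝ) := by exact_mod_cast hp
      nlinarith
    have hxle : ((p : ℝ) - 1) * K ≤ max K 1 * (n : ℝ) := by
      have h1 : K ≤ max K 1 := le_max_left K 1
      calc ((p : ℝ) - 1) * K ≤ (n : ℝ) * max K 1 :=
            mul_le_mul hpn h1 hK.le (Nat.cast_nonneg n)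
        _ = max K 1 * (n : ℝ) := mul_comm _ _
    have hcn : (((p : ℝ) - 1) * K) ^ τ ≤ c ^ n := by
      calc (((p : ℝ) - 1) * K) ^ τ
          ≤ (max K 1 * (n : ℝ)) ^ τ := Real.rpow_le_rpow hx0 hxle hτ.le
        _ = (max K 1) ^ τ * ((n : ℝ)) ^ τ := Real.mul_rpow (by positivity) (by positivity)
        _ ≤ ((max K 1) ^ τ) ^ n * ((2:ℝ) ^ τ) ^ n := by
            apply mul_le_mul
            · exact le_self_pow₀ (Real.one_le_rpow (le_max_right K 1) hτ.le) (by omega)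
            · -- (n:ℝ)^τ ≤ (2^τ)^n
              have : ((n:ℝ)) ^ τ ≤ ((2:ℝ) ^ (n:ℝ)) ^ τ := by
                apply Real.rpow_le_rpow (by positivity) ?_ hτ.le
                have := (Nat.lt_two_pow_self (n := n)).le
                calc ((n:ℝ)) ≤ ((2^n : ℕ) : ℝ) := by exact_mod_cast this
                  _ = (2:ℝ) ^ (n:ℝ) := by push_cast; rw [Real.rpow_natCast]
              calc ((n:ℝ)) ^ τ ≤ ((2:ℝ) ^ (n:ℝ)) ^ τ := this
                _ = ((2:ℝ) ^ τ) ^ n := by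
                    rw [← Real.rpow_natCast ((2:ℝ) ^ τ) n,
                      ← Real.rpow_mul (by norm_num : (0:ℝ) ≤ 2),
                      ← Real.rpow_mul (by norm_num : (0:ℝ) ≤ 2), mul_comm]
            · positivity
            · positivity
        _ = c ^ n := by rw [hc_def, mul_pow]
    have h1cn : (1:ℝ) ≤ c ^ n := one_le_pow₀ hc1
    have h2n : (2:ℝ) ≤ (2:ℝ) ^ n := le_self_pow₀ (by norm_num) (by omega)
    have hcn0 : (0:ℝ) ≤ c ^ n := by positivity
    calc 1 + (((p : ℝ) - 1) * K) ^ τ ≤ c ^ n + c ^ n := by linarith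
      _ = 2 * c ^ n := by ring
      _ ≤ (2:ℝ) ^ n * c ^ n := mul_le_mul_of_nonneg_right h2n hcn0
      _ = (2 * c) ^ n := (mul_pow 2 c n).symm
  -- combine
  have hx0' : (0:ℝ) ≤ 1 + (((p : ℝ) - 1) * K) ^ τ := by
    have : (0:ℝ) ≤ (((p : ℝ) - 1) * K) ^ τ := Real.rpow_nonneg (by
      have : (1:ℝ) ≤ (p : ℝ) := by exact_mod_cast hp
      nlinarith) τ
    linarith
  calc Mp p * (1 + (((p : ℝ) - 1) * K) ^ τ)
      ≤ ((4 * (p : ℝ) ^ 2 / ρ) ^ (2 * τ * p) * (4 * (p : ℝ) ^ 2 / σ) ^ (2 * p) *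
        M ^ (2 ^ p)) * ((2 * c) ^ n) := by
        apply mul_le_mul (hMp p hp) hF4 hx0'
        positivity
    _ ≤ ((a ^ (8 * τ)) ^ n * (b ^ 8) ^ n * (m ^ 2) ^ n) * ((2 * c) ^ n) := by
        apply mul_le_mul_of_nonneg_right _ (by positivity)
        apply mul_le_mul (mul_le_mul hF1 hF2 (by positivity) (by positivity)) hF3
          (by positivity) (by positivity)
    _ = (a ^ (8 * τ) * b ^ 8 * m ^ 2 * (2 * c)) ^ n := by
        rw [← mul_pow, ← mul_pow, ← mul_pow]

/-- survival of the diophantine constant along the Kolmogorov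
iteration: γ_p = γ_{p-1} - ε^{2^{p-1}} M_p (1 + ((p-1)K)^τ) stays ≥ γ/2,
is decreasing and converges to a positive limit, for ε > 0 small enough. -/
theorem stmt_9 (γ K τ ρ σ M : ℝ) (hγ : 0 < γ) (hK : 0 < K) (hτ : 0 < τ)
    (hρ : 0 < ρ) (hσ : 0 < σ) (hM : 0 < M)
    (Mp : ℕ → ℝ) (hMp0 : ∀ p, 0 ≤ Mp p)
    (hMp : ∀ p : ℕ, 1 ≤ p →
      Mp p ≤ (4 * (p : ℝ) ^ 2 / ρ) ^ (2 * τ * p) * (4 * (p : ℝ) ^ 2 / σ) ^ (2 * p) *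
        M ^ (2 ^ p)) :
    ∃ εstar : ℝ, 0 < εstar ∧ ∀ ε : ℝ, 0 < ε → ε < εstar →
      ∀ γs : ℕ → ℝ, γs 0 = γ →
        (∀ p : ℕ, 1 ≤ p →
          γs p = γs (p - 1) - ε ^ (2 ^ (p - 1)) * Mp p *
            (1 + (((p : ℝ) - 1) * K) ^ τ)) →
        (Antitone γs ∧ (∀ p, γ / 2 ≤ γs p) ∧
          ∃ γinf : ℝ, 0 < γinf ∧ Tendsto γs atTop (nhds γinf)) := by
  obtain ⟨B, hB1, hkey⟩ := key K τ ρ σ M hK hτ hρ hσ hM Mp hMp0 hMp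
  have hB0 : (0:ℝ) < B := lt_of_lt_of_le one_pos hB1
  refine ⟨min (1 / (2 * B)) (γ / (8 * B)), by positivity, ?_⟩
  intro ε hε hεs γs hγs0 hrec
  set term : ℕ → ℝ := fun k => ε ^ (2 ^ k) * Mp (k + 1) * (1 + ((k : ℝ) * K) ^ τ)
    with hterm_def
  -- recursion in convenient form
  have hstep : ∀ k : ℕ, γs (k + 1) = γs k - term k := by
    intro k
    have h := hrec (k + 1) (Nat.le_add_left 1 k)
    simp only [Nat.add_sub_cancel] at h
    have hcast : ((k + 1 : ℕ) : ℝ) - 1 = (k : ℝ) := by push_cast; ring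
    rw [hcast] at h
    exact h
  -- positivity of terms
  have hterm0 : ∀ k, 0 ≤ term k := by
    intro k
    have h1 : (0:ℝ) ≤ ((k : ℝ) * K) ^ τ := Real.rpow_nonneg (by positivity) τ
    have : (0:ℝ) ≤ 1 + ((k : ℝ) * K) ^ τ := by linarith
    rw [hterm_def]
    have h2 : (0:ℝ) ≤ ε ^ (2 ^ k) := by positivity
    exact mul_nonneg (mul_nonneg h2 (hMp0 (k + 1))) this
  set q : ℝ := ε * B with hq_def
  have hq0 : 0 ≤ q := by positivity
  have hq_half : q ≤ 1 / 2 := by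
    have h1 : ε < 1 / (2 * B) := lt_of_lt_of_le hεs (min_le_left _ _)
    rw [hq_def]
    calc ε * B ≤ (1 / (2 * B)) * B := mul_le_mul_of_nonneg_right h1.le hB0.le
      _ = 1 / 2 := by field_simp
  have hqγ : q ≤ γ / 8 := by
    have h1 : ε < γ / (8 * B) := lt_of_lt_of_le hεs (min_le_right _ _)
    rw [hq_def]
    calc ε * B ≤ (γ / (8 * B)) * B := mul_le_mul_of_nonneg_right h1.le hB0.le
      _ = γ / 8 := by field_simp
  -- term bound
  have hterm_le : ∀ k, term k ≤ q * (1 / 2 : ℝ) ^ k := by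
    intro k
    have hb := hkey (k + 1) (Nat.le_add_left 1 k)
    simp only [Nat.add_sub_cancel] at hb
    have hcast : ((k + 1 : ℕ) : ℝ) - 1 = (k : ℝ) := by push_cast; ring
    rw [hcast] at hb
    have h1 : (0:ℝ) ≤ 1 + ((k : ℝ) * K) ^ τ := by
      have := Real.rpow_nonneg (show (0:ℝ) ≤ (k : ℝ) * K by positivity) τ
      linarith
    have h2 : term k ≤ q ^ (2 ^ k) := by
      rw [hterm_def, hq_def]
      calc ε ^ (2 ^ k) * Mp (k + 1) * (1 + ((k : ℝ) * K) ^ τ)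
          = ε ^ (2 ^ k) * (Mp (k + 1) * (1 + ((k : ℝ) * K) ^ τ)) := by ring
        _ ≤ ε ^ (2 ^ k) * B ^ (2 ^ k) := by
            apply mul_le_mul_of_nonneg_left hb (by positivity)
        _ = (ε * B) ^ (2 ^ k) := (mul_pow ε B _).symm
    have h3 : q ^ (2 ^ k) ≤ q ^ (k + 1) :=
      pow_le_pow_of_le_one hq0 (by linarith) (Nat.lt_two_pow_self (n := k))
    have h4 : q ^ (k + 1) ≤ q * (1 / 2 : ℝ) ^ k := by
      rw [pow_succ']
      exact mul_le_mul_of_nonneg_left (pow_le_pow_left₀ hq0 hq_half k) hq0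
    linarith
  -- summability
  have hgeo : Summable (fun k : ℕ => q * (1 / 2 : ℝ) ^ k) :=
    (summable_geometric_of_lt_one (by norm_num) (by norm_num)).mul_left q
  have hsum : Summable term := Summable.of_nonneg_of_le hterm0 hterm_le hgeo
  set S : ℝ := ∑' k, term k with hS_def
  have hS0 : 0 ≤ S := tsum_nonneg hterm0
  have hSle : S ≤ γ / 4 := by
    have h1 : S ≤ ∑' k : ℕ, q * (1 / 2 : ℝ) ^ k := Summable.tsum_le_tsum hterm_le hsum hgeo
    have h2 : ∑' k : ℕ, q * (1 / 2 : ℝ) ^ k = q * 2 := by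
      rw [tsum_mul_left, tsum_geometric_of_lt_one (by norm_num) (by norm_num)]
      norm_num
    rw [h2] at h1
    linarith
  -- closed form
  have hγs_eq : ∀ nn : ℕ, γs nn = γ - ∑ k ∈ Finset.range nn, term k := by
    intro nn
    induction nn with
    | zero => simp [hγs0]
    | succ k ih => rw [hstep k, ih, Finset.sum_range_succ]; ring
  refine ⟨?_, ?_, ?_⟩
  · apply antitone_nat_of_succ_le
    intro k
    rw [hstep k]
    linarith [hterm0 k]
  · intro p
    rw [hγs_eq p]
    have h1 : ∑ k ∈ Finset.range p, term k ≤ S :=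
      Summable.sum_le_tsum (Finset.range p) (fun i _ => hterm0 i) hsum
    linarith
  · refine ⟨γ - S, by linarith, ?_⟩
    have h1 : Tendsto (fun nn => ∑ k ∈ Finset.range nn, term k) atTop (nhds S) :=
      hsum.hasSum.tendsto_sum_nat
    have h2 : Tendsto (fun nn => γ - ∑ k ∈ Finset.range nn, term k) atTop (nhds (γ - S)) :=
      tendsto_const_nhds.sub h1
    exact h2.congr (fun nn => (hγs_eq nn).symm)
end

section
/- For f, g with ∫|f̂(s)| e^{σ|s|} ds < ∞ and ∫|ĝ(s)| e^{(σ-δ)|s|} ds < ∞, the Moyal bracket {f,g}_M satisfies, for any 0 < δ' < σ - δ: ∫|({f,g}_M)^∧(s)| e^{(σ-δ-δ')|s|} ds ≤ (e² δ'(δ+δ'))^{-1} (∫|f̂| e^{σ|s|}) (∫|ĝ| e^{(σ-δ)|s|}). -/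
open Real Finset MeasureTheory Complex

/-- Euclidean norm of a phase-space point s = (v,w) ∈ ℝ^l × ℝ^l. -/
noncomputable def enorm11 (l : ℕ) (s : (Fin l → ℝ) × (Fin l → ℝ)) : ℝ :=
  Real.sqrt (∑ i, s.1 i ^ 2 + ∑ i, s.2 i ^ 2)

/-- The symplectic wedge (v,w) ∧ (v¹,w¹) = ⟨w,v¹⟩ - ⟨v,w¹⟩. -/
def wedge11 (l : ℕ) (s t : (Fin l → ℝ) × (Fin l → ℝ)) : ℝ :=
  ∑ i, s.2 i * t.1 i - ∑ i, s.1 i * t.2 i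

/-- The Fourier transform of the Moyal bracket:
({f,g}_M)^∧(s) = (2/ℏ) ∫ f̂(s¹) ĝ(s-s¹) sin(ℏ (s-s¹)∧s¹ / 2) ds¹. -/
noncomputable def moyalHat11 (l : ℕ) (ℏ : ℝ)
    (fh gh : (Fin l → ℝ) × (Fin l → ℝ) → ℂ)
    (s : (Fin l → ℝ) × (Fin l → ℝ)) : ℂ :=
  (2 / ℏ : ℝ) * ∫ s₁ : (Fin l → ℝ) × (Fin l → ℝ),
    fh s₁ * gh (s - s₁) * (Real.sin (ℏ * wedge11 l (s - s₁) s₁ / 2) : ℝ)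


lemma aux_cs2 (A B C D : ℝ) (hA : 0 ≤ A) (hB : 0 ≤ B) (hC : 0 ≤ C) (hD : 0 ≤ D) :
    A * B + C * D ≤ Real.sqrt (A ^ 2 + C ^ 2) * Real.sqrt (B ^ 2 + D ^ 2) := by
  have hS : Real.sqrt (A ^ 2 + C ^ 2) ^ 2 = A ^ 2 + C ^ 2 := Real.sq_sqrt (by positivity)
  have hT : Real.sqrt (B ^ 2 + D ^ 2) ^ 2 = B ^ 2 + D ^ 2 := Real.sq_sqrt (by positivity)
  have hSn : 0 ≤ Real.sqrt (A ^ 2 + C ^ 2) := Real.sqrt_nonneg _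
  have hTn : 0 ≤ Real.sqrt (B ^ 2 + D ^ 2) := Real.sqrt_nonneg _
  nlinarith [sq_nonneg (A * D - C * B), mul_nonneg hSn hTn,
    sq_nonneg (Real.sqrt (A ^ 2 + C ^ 2) * Real.sqrt (B ^ 2 + D ^ 2) - (A * B + C * D))]

lemma aux_cs {l : ℕ} (a b c d : Fin l → ℝ) :
    (∑ i, a i * b i) + (∑ i, c i * d i) ≤
      Real.sqrt (∑ i, a i ^ 2 + ∑ i, c i ^ 2) * Real.sqrt (∑ i, b i ^ 2 + ∑ i, d i ^ 2) := by
  have key : ∀ (u v : Fin l → ℝ), (∑ i, u i * v i) ≤ Real.sqrt (∑ i, u i ^ 2) * Real.sqrt (∑ i, v i ^ 2) := by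
    intro u v
    have h := Finset.sum_mul_sq_le_sq_mul_sq Finset.univ u v
    calc (∑ i, u i * v i) ≤ |∑ i, u i * v i| := le_abs_self _
      _ = Real.sqrt ((∑ i, u i * v i) ^ 2) := (Real.sqrt_sq_eq_abs _).symm
      _ ≤ Real.sqrt ((∑ i, u i ^ 2) * ∑ i, v i ^ 2) := Real.sqrt_le_sqrt h
      _ = Real.sqrt (∑ i, u i ^ 2) * Real.sqrt (∑ i, v i ^ 2) := Real.sqrt_mul (by positivity) _
  have h1 := key a b
  have h2 := key c d
  have h3 := aux_cs2 (Real.sqrt (∑ i, a i ^ 2)) (Real.sqrt (∑ i, b i ^ 2))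
      (Real.sqrt (∑ i, c i ^ 2)) (Real.sqrt (∑ i, d i ^ 2))
      (Real.sqrt_nonneg _) (Real.sqrt_nonneg _) (Real.sqrt_nonneg _) (Real.sqrt_nonneg _)
  rw [Real.sq_sqrt (by positivity), Real.sq_sqrt (by positivity),
    Real.sq_sqrt (by positivity), Real.sq_sqrt (by positivity)] at h3
  linarith

lemma enorm11_nonneg (l : ℕ) (s : (Fin l → ℝ) × (Fin l → ℝ)) : 0 ≤ enorm11 l s :=
  Real.sqrt_nonneg _

lemma wedge11_abs_le (l : ℕ) (s t : (Fin l → ℝ) × (Fin l → ℝ)) :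
    |wedge11 l s t| ≤ enorm11 l s * enorm11 l t := by
  rw [abs_le]
  constructor
  · have h := aux_cs s.1 t.2 s.2 (fun i => -(t.1 i))
    simp only [mul_neg, Finset.sum_neg_distrib, neg_sq] at h
    rw [add_comm (∑ i, t.2 i ^ 2)] at h
    simp only [wedge11, enorm11]
    linarith
  · have h := aux_cs s.2 t.1 s.1 (fun i => -(t.2 i))
    simp only [mul_neg, Finset.sum_neg_distrib, neg_sq] at h
    rw [add_comm (∑ i, s.2 i ^ 2)] at h
    simp only [wedge11, enorm11]
    linarith

lemma enorm11_triangle (l : ℕ) (a b : (Fin l → ℝ) × (Fin l → ℝ)) :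
    enorm11 l (a + b) ≤ enorm11 l a + enorm11 l b := by
  have hA : enorm11 l a ^ 2 = ∑ i, a.1 i ^ 2 + ∑ i, a.2 i ^ 2 := Real.sq_sqrt (by positivity)
  have hB : enorm11 l b ^ 2 = ∑ i, b.1 i ^ 2 + ∑ i, b.2 i ^ 2 := Real.sq_sqrt (by positivity)
  have hcs := aux_cs a.1 b.1 a.2 b.2
  have hAn := enorm11_nonneg l a
  have hBn := enorm11_nonneg l b
  have key : ∑ i, (a + b).1 i ^ 2 + ∑ i, (a + b).2 i ^ 2 ≤ (enorm11 l a + enorm11 l b) ^ 2 := by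
    simp only [Prod.fst_add, Prod.snd_add, Pi.add_apply, add_sq, Finset.sum_add_distrib]
    have e1 : ∑ i, 2 * a.1 i * b.1 i = 2 * ∑ i, a.1 i * b.1 i := by
      rw [Finset.mul_sum]; exact Finset.sum_congr rfl fun i _ => by ring
    have e2 : ∑ i, 2 * a.2 i * b.2 i = 2 * ∑ i, a.2 i * b.2 i := by
      rw [Finset.mul_sum]; exact Finset.sum_congr rfl fun i _ => by ring
    rw [e1, e2]
    have ea : Real.sqrt (∑ i, a.1 i ^ 2 + ∑ i, a.2 i ^ 2) = enorm11 l a := rfl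
    have eb : Real.sqrt (∑ i, b.1 i ^ 2 + ∑ i, b.2 i ^ 2) = enorm11 l b := rfl
    rw [ea, eb] at hcs
    nlinarith [hcs, hA, hB]
  calc enorm11 l (a + b) ≤ Real.sqrt ((enorm11 l a + enorm11 l b) ^ 2) := Real.sqrt_le_sqrt key
    _ = enorm11 l a + enorm11 l b := Real.sqrt_sq (by linarith)

lemma aux_xexp (c x : ℝ) (hc : 0 < c) (hx : 0 ≤ x) :
    x * Real.exp (-(c * x)) ≤ (Real.exp 1 * c)⁻¹ := by
  have h1 : c * x ≤ Real.exp (c * x - 1) := by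
    have := Real.add_one_le_exp (c * x - 1); linarith
  have h3 : Real.exp (c * x - 1) * Real.exp (-(c * x)) = Real.exp (-1) := by
    rw [← Real.exp_add]; ring_nf
  have h2 : c * (x * Real.exp (-(c * x))) ≤ Real.exp (-1) := by
    calc c * (x * Real.exp (-(c * x))) = (c * x) * Real.exp (-(c * x)) := by ring
      _ ≤ Real.exp (c * x - 1) * Real.exp (-(c * x)) :=
        mul_le_mul_of_nonneg_right h1 (Real.exp_pos _).le
      _ = Real.exp (-1) := h3
  rw [show (Real.exp 1 * c)⁻¹ = Real.exp (-1) / c by rw [Real.exp_neg]; field_simp]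
  rw [le_div_iff₀ hc]
  nlinarith

/-- weighted L¹ estimate for the Moyal bracket on the Fourier side:
∫‖({f,g}_M)^∧(s)‖ e^{(σ-δ-δ')|s|} ds
  ≤ (e² δ'(δ+δ'))⁻¹ (∫‖f̂‖e^{σ|s|})(∫‖ĝ‖e^{(σ-δ)|s|}). -/
theorem stmt_11 (l : ℕ) (ℏ σ δ δ' : ℝ) (hℏ : 0 < ℏ) (hδ : 0 ≤ δ)
    (hδ' : 0 < δ') (hδ'' : δ' < σ - δ)
    (fh gh : (Fin l → ℝ) × (Fin l → ℝ) → ℂ)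
    (hf : Integrable fun s => ‖fh s‖ * Real.exp (σ * enorm11 l s))
    (hg : Integrable fun s => ‖gh s‖ * Real.exp ((σ - δ) * enorm11 l s)) :
    (∫ s, ‖moyalHat11 l ℏ fh gh s‖ * Real.exp ((σ - δ - δ') * enorm11 l s)) ≤
      (Real.exp 1 ^ 2 * δ' * (δ + δ'))⁻¹ *
        (∫ s, ‖fh s‖ * Real.exp (σ * enorm11 l s)) *
        (∫ s, ‖gh s‖ * Real.exp ((σ - δ) * enorm11 l s)) := by
  haveI hinv : ((volume : Measure ((Fin l → ℝ) × (Fin l → ℝ)))).IsAddRightInvariant := by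
    rw [MeasureTheory.Measure.volume_eq_prod]; infer_instance
  set w : ℝ := σ - δ - δ' with hw
  have hw0 : 0 < w := by rw [hw]; linarith
  set F : (Fin l → ℝ) × (Fin l → ℝ) → ℝ := fun s => ‖fh s‖ * Real.exp (σ * enorm11 l s) with hF
  set G : (Fin l → ℝ) × (Fin l → ℝ) → ℝ := fun s => ‖gh s‖ * Real.exp ((σ - δ) * enorm11 l s) with hG
  set C : ℝ := (Real.exp 1 ^ 2 * δ' * (δ + δ'))⁻¹ with hC
  have hδδ' : 0 < δ + δ' := by linarith
  have hCeq : C = (Real.exp 1 * (δ + δ'))⁻¹ * (Real.exp 1 * δ')⁻¹ := by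
    rw [hC, show Real.exp 1 ^ 2 * δ' * (δ + δ') = (Real.exp 1 * (δ + δ')) * (Real.exp 1 * δ') by ring, mul_inv]
  -- convolution integrand is integrable on the product
  have hconv : Integrable (fun p : ((Fin l → ℝ) × (Fin l → ℝ)) × ((Fin l → ℝ) × (Fin l → ℝ)) => F p.2 * G (p.1 - p.2))
      ((volume : Measure ((Fin l → ℝ) × (Fin l → ℝ))).prod volume) := by
    exact hf.convolution_integrand (ContinuousLinearMap.mul ℝ ℝ) hg
  have haeint : ∀ᵐ s : (Fin l → ℝ) × (Fin l → ℝ), Integrable (fun s₁ => F s₁ * G (s - s₁)) volume :=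
    hconv.prod_right_ae
  have hK : Integrable (fun s : (Fin l → ℝ) × (Fin l → ℝ) => ∫ s₁, F s₁ * G (s - s₁)) volume :=
    hconv.integral_prod_left
  have hKval : (∫ s : (Fin l → ℝ) × (Fin l → ℝ), ∫ s₁ : (Fin l → ℝ) × (Fin l → ℝ), F s₁ * G (s - s₁)) = (∫ s, F s) * (∫ s, G s) := by
    have hswap : (∫ s, ∫ s₁, F s₁ * G (s - s₁)) = ∫ s₁, ∫ s, F s₁ * G (s - s₁) :=
      MeasureTheory.integral_integral_swap (by exact hconv)
    rw [hswap]
    calc (∫ s₁, ∫ s, F s₁ * G (s - s₁))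
        = ∫ s₁, F s₁ * ∫ s, G (s - s₁) := by
          refine integral_congr_ae (ae_of_all _ fun s₁ => ?_)
          exact MeasureTheory.integral_const_mul _ _
      _ = ∫ s₁, F s₁ * ∫ s, G s := by
          refine integral_congr_ae (ae_of_all _ fun s₁ => ?_)
          show F s₁ * (∫ s, G (s - s₁)) = F s₁ * ∫ s, G s
          rw [MeasureTheory.integral_sub_right_eq_self G s₁]
      _ = (∫ s, F s) * (∫ s, G s) := MeasureTheory.integral_mul_const _ _
  -- key pointwise (a.e.) bound
  have key : ∀ᵐ s : (Fin l → ℝ) × (Fin l → ℝ), ‖moyalHat11 l ℏ fh gh s‖ * Real.exp (w * enorm11 l s) ≤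
      C * ∫ s₁, F s₁ * G (s - s₁) := by
    filter_upwards [haeint] with s hs
    have hE0 : (0:ℝ) ≤ Real.exp (w * enorm11 l s) := (Real.exp_pos _).le
    have step1 : ‖moyalHat11 l ℏ fh gh s‖ ≤
        (2 / ℏ) * ∫ s₁, ‖fh s₁ * gh (s - s₁) *
          ((Real.sin (ℏ * wedge11 l (s - s₁) s₁ / 2) : ℝ) : ℂ)‖ := by
      rw [moyalHat11, norm_mul, Complex.norm_real, Real.norm_eq_abs,
        abs_of_pos (by positivity)]
      exact mul_le_mul_of_nonneg_left (norm_integral_le_integral_norm _) (by positivity)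
    have ptbound : ∀ s₁ : (Fin l → ℝ) × (Fin l → ℝ), (2 / ℏ * Real.exp (w * enorm11 l s)) *
        ‖fh s₁ * gh (s - s₁) * ((Real.sin (ℏ * wedge11 l (s - s₁) s₁ / 2) : ℝ) : ℂ)‖ ≤
        C * (F s₁ * G (s - s₁)) := by
      intro s₁
      set a := enorm11 l s₁ with ha'
      set b := enorm11 l (s - s₁) with hb'
      have ha : 0 ≤ a := enorm11_nonneg l s₁
      have hb : 0 ≤ b := enorm11_nonneg l (s - s₁)
      have hp : (0:ℝ) ≤ ‖fh s₁‖ := norm_nonneg _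
      have hq : (0:ℝ) ≤ ‖gh (s - s₁)‖ := norm_nonneg _
      have hnorm : ‖fh s₁ * gh (s - s₁) * ((Real.sin (ℏ * wedge11 l (s - s₁) s₁ / 2) : ℝ) : ℂ)‖
          = ‖fh s₁‖ * ‖gh (s - s₁)‖ * |Real.sin (ℏ * wedge11 l (s - s₁) s₁ / 2)| := by
        rw [norm_mul, norm_mul, Complex.norm_real, Real.norm_eq_abs]
      have hsin : |Real.sin (ℏ * wedge11 l (s - s₁) s₁ / 2)| ≤ ℏ / 2 * (b * a) := by
        refine le_trans Real.abs_sin_le_abs ?_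
        rw [abs_div, abs_mul, abs_of_pos hℏ, abs_of_pos (by norm_num : (0:ℝ) < 2)]
        have := wedge11_abs_le l (s - s₁) s₁
        calc ℏ * |wedge11 l (s - s₁) s₁| / 2 ≤ ℏ * (b * a) / 2 := by
              apply div_le_div_of_nonneg_right ?_ (by norm_num)
              · exact mul_le_mul_of_nonneg_left this hℏ.le
          _ = ℏ / 2 * (b * a) := by ring
      have htri : enorm11 l s ≤ a + b := by
        have heq : s₁ + (s - s₁) = s := by abel
        have := enorm11_triangle l s₁ (s - s₁)
        rw [heq] at this
        exact this
      have hEle : Real.exp (w * enorm11 l s) ≤ Real.exp (w * a) * Real.exp (w * b) := by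
        rw [← Real.exp_add]
        apply Real.exp_le_exp.mpr
        have := mul_le_mul_of_nonneg_left htri hw0.le
        linarith [this]
      have hxa : a * Real.exp (w * a) ≤ (Real.exp 1 * (δ + δ'))⁻¹ * Real.exp (σ * a) := by
        have h := aux_xexp (δ + δ') a hδδ' ha
        calc a * Real.exp (w * a)
            = (a * Real.exp (-((δ + δ') * a))) * Real.exp (σ * a) := by
              rw [mul_assoc, ← Real.exp_add, hw]; ring_nf
          _ ≤ (Real.exp 1 * (δ + δ'))⁻¹ * Real.exp (σ * a) :=
            mul_le_mul_of_nonneg_right h (Real.exp_pos _).le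
      have hxb : b * Real.exp (w * b) ≤ (Real.exp 1 * δ')⁻¹ * Real.exp ((σ - δ) * b) := by
        have h := aux_xexp δ' b hδ' hb
        calc b * Real.exp (w * b)
            = (b * Real.exp (-(δ' * b))) * Real.exp ((σ - δ) * b) := by
              rw [mul_assoc, ← Real.exp_add, hw]; ring_nf
          _ ≤ (Real.exp 1 * δ')⁻¹ * Real.exp ((σ - δ) * b) :=
            mul_le_mul_of_nonneg_right h (Real.exp_pos _).le
      rw [hnorm]
      have hFs : F s₁ = ‖fh s₁‖ * Real.exp (σ * a) := rfl
      have hGs : G (s - s₁) = ‖gh (s - s₁)‖ * Real.exp ((σ - δ) * b) := rfl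
      rw [hFs, hGs, hCeq]
      calc (2 / ℏ * Real.exp (w * enorm11 l s)) *
            (‖fh s₁‖ * ‖gh (s - s₁)‖ * |Real.sin (ℏ * wedge11 l (s - s₁) s₁ / 2)|)
          ≤ (2 / ℏ * (Real.exp (w * a) * Real.exp (w * b))) *
            (‖fh s₁‖ * ‖gh (s - s₁)‖ * (ℏ / 2 * (b * a))) := by
            gcongr <;> positivity
        _ = (‖fh s₁‖ * (a * Real.exp (w * a))) * (‖gh (s - s₁)‖ * (b * Real.exp (w * b))) := by
            field_simp
        _ ≤ (‖fh s₁‖ * ((Real.exp 1 * (δ + δ'))⁻¹ * Real.exp (σ * a))) *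
            (‖gh (s - s₁)‖ * ((Real.exp 1 * δ')⁻¹ * Real.exp ((σ - δ) * b))) := by
            gcongr
        _ = (Real.exp 1 * (δ + δ'))⁻¹ * (Real.exp 1 * δ')⁻¹ *
            (‖fh s₁‖ * Real.exp (σ * a) * (‖gh (s - s₁)‖ * Real.exp ((σ - δ) * b))) := by
            ring
    calc ‖moyalHat11 l ℏ fh gh s‖ * Real.exp (w * enorm11 l s)
        ≤ ((2 / ℏ) * ∫ s₁, ‖fh s₁ * gh (s - s₁) *
            ((Real.sin (ℏ * wedge11 l (s - s₁) s₁ / 2) : ℝ) : ℂ)‖) *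
            Real.exp (w * enorm11 l s) := mul_le_mul_of_nonneg_right step1 hE0
      _ = ∫ s₁, (2 / ℏ * Real.exp (w * enorm11 l s)) *
            ‖fh s₁ * gh (s - s₁) * ((Real.sin (ℏ * wedge11 l (s - s₁) s₁ / 2) : ℝ) : ℂ)‖ := by
            rw [MeasureTheory.integral_const_mul]; ring
      _ ≤ ∫ s₁, C * (F s₁ * G (s - s₁)) :=
            integral_mono_of_nonneg (ae_of_all _ fun s₁ => by positivity)
              (hs.const_mul C) (ae_of_all _ ptbound)
      _ = C * ∫ s₁, F s₁ * G (s - s₁) := MeasureTheory.integral_const_mul _ _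
  -- conclude
  calc (∫ s, ‖moyalHat11 l ℏ fh gh s‖ * Real.exp (w * enorm11 l s))
      ≤ ∫ s, C * ∫ s₁, F s₁ * G (s - s₁) :=
        integral_mono_of_nonneg (ae_of_all _ fun s => by positivity)
          (hK.const_mul C) key
    _ = C * ∫ s, ∫ s₁, F s₁ * G (s - s₁) := MeasureTheory.integral_const_mul _ _
    _ = C * ((∫ s, F s) * (∫ s, G s)) := by rw [hKval]
    _ = C * (∫ s, F s) * (∫ s, G s) := by ring
end
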